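/- Fix ε > 0 and a positive integer K; the grid points are x_i = i/K for i = 1,…,K. Let f : [0,1] → [0,1] be convex, let i* minimize f(x_j) over j ∈ {1,…,K} and set x* = x_{i*}. Let S ⊆ {1,…,K}, and for each i ∈ S let f_i : [0,1] → [0,1] be a convex function with f_i(x_i) ≤ f(x*). Let π be a probability vector on {1,…,K} with π_{i*} ≥ 1/2. Define ε_j = ε·|x_j − x*|, S_i = {j ∈ S : x_j lies in the closed interval with endpoints x_i and x*}, and for i ∈ S with i ≠ i* set w_i = ∑_{j∈S_i} π_j·((f(x_j) − f(x*) + ε_j)/(f(x_i) − f(x*) + ε_i))², while w_{i*} = π_{i*}. Then for every i ∈ S, ∑_{j=1}^K π_j (f(x_j) − f_i(x_j))² ≥ (1/4)·w_i·(f(x_i) − f_i(x_i))² − ε². -/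

import Mathlib

lemma scalar_aux (a s v e : ℝ) (ha : 0 ≤ a) (hs : 0 ≤ s) (he : 0 ≤ e)
    (h : a - s - e ≤ v) : a^2/4 - 2*e^2 ≤ s^2 + v^2 := by
  rcases le_or_gt v 0 with hv | hv
  · have : a ≤ s + e := by nlinarith
    nlinarith [sq_nonneg v, sq_nonneg (s - e)]
  · nlinarith [sq_nonneg (s - v), sq_nonneg (s - e), sq_nonneg (v - e), sq_nonneg (a - s - e - v)]

lemma rt_aux (t r fxj fxstar fxi εjj εji : ℝ) (hD : 0 < fxi - fxstar + εji)
    (hr : r = (fxj - fxstar + εjj) / (fxi - fxstar + εji))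
    (hconvf : fxj ≤ (1 - t) * fxstar + t * fxi) (hεjt : εjj = t * εji) : r ≤ t := by
  rw [hr, div_le_iff₀ hD]
  nlinarith

lemma pointwise_aux (t r G s ε εji εjj fxj fxstar fxi fij fistar fii : ℝ)
    (ht0 : 0 ≤ t) (ht1 : t ≤ 1)
    (hconvfi : fij ≤ (1 - t) * fistar + t * fii)
    (hrD : fxj - fxstar + εjj = r * (fxi - fxstar + εji))
    (hrt : r ≤ t) (hr0 : 0 ≤ r)
    (hεji : 0 ≤ εji) (hεjle : εjj ≤ ε)
    (hfii : fii ≤ fxstar)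
    (hs : -s ≤ fxstar - fistar) (hs0 : 0 ≤ s)
    (hG : G = fxi - fii) : r * G - ε - s ≤ fxj - fij := by
  subst hG
  have h8 : r * (fxstar - fii) ≤ t * (fxstar - fii) :=
    mul_le_mul_of_nonneg_right hrt (by linarith)
  have h9 : 0 ≤ t * s := mul_nonneg ht0 hs0
  have h10 : 0 ≤ r * εji := mul_nonneg hr0 hεji
  have h11 : (1 - t) * (-s) ≤ (1 - t) * (fxstar - fistar) :=
    mul_le_mul_of_nonneg_left hs (by linarith)
  nlinarith [hconvfi, hrD, h8, h9, h10, h11, hεjle]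

theorem l2_bound
    (ε : ℝ) (hε : 0 < ε) (K : ℕ) (hK : 0 < K)
    (x : ℕ → ℝ) (hx : ∀ i, x i = (i : ℝ) / K)
    (f : ℝ → ℝ) (hf : ConvexOn ℝ (Set.Icc (0:ℝ) 1) f)
    (hf01 : ∀ t ∈ Set.Icc (0:ℝ) 1, f t ∈ Set.Icc (0:ℝ) 1)
    (istar : ℕ) (histar : istar ∈ Finset.Icc 1 K)
    (hmin : ∀ j ∈ Finset.Icc 1 K, f (x istar) ≤ f (x j))
    (S : Finset ℕ) (hSsub : S ⊆ Finset.Icc 1 K)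
    (fi : ℕ → ℝ → ℝ)
    (hfi : ∀ i ∈ S, ConvexOn ℝ (Set.Icc (0:ℝ) 1) (fi i))
    (hfi01 : ∀ i ∈ S, ∀ t ∈ Set.Icc (0:ℝ) 1, fi i t ∈ Set.Icc (0:ℝ) 1)
    (hfix : ∀ i ∈ S, fi i (x i) ≤ f (x istar))
    (π : ℕ → ℝ) (hπ0 : ∀ i, 0 ≤ π i) (hπ1 : ∑ i ∈ Finset.Icc 1 K, π i = 1)
    (hπstar : 1 / 2 ≤ π istar)
    (εj : ℕ → ℝ) (hεj : ∀ j, εj j = ε * |x j - x istar|)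
    (Si : ℕ → Finset ℕ)
    (hSi : ∀ i, Si i = S.filter
      (fun j => min (x i) (x istar) ≤ x j ∧ x j ≤ max (x i) (x istar)))
    (w : ℕ → ℝ)
    (hw : ∀ i ∈ S, i ≠ istar → w i = ∑ j ∈ Si i, π j *
      ((f (x j) - f (x istar) + εj j) / (f (x i) - f (x istar) + εj i)) ^ 2)
    (hwstar : w istar = π istar) :
    ∀ i ∈ S,
      (1/4) * w i * (f (x i) - fi i (x i)) ^ 2 - ε ^ 2
        ≤ ∑ j ∈ Finset.Icc 1 K, π j * (f (x j) - fi i (x j)) ^ 2 := by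
  intro i hiS
  have hK' : (0:ℝ) < K := by exact_mod_cast hK
  have hx01 : ∀ j ∈ Finset.Icc 1 K, x j ∈ Set.Icc (0:ℝ) 1 := by
    intro j hj
    rw [Finset.mem_Icc] at hj
    rw [hx]
    constructor
    · positivity
    · rw [div_le_one hK']
      exact_mod_cast hj.2
  have hxstar01 := hx01 istar histar
  have hxi01 := hx01 i (hSsub hiS)
  have hterm_nonneg : ∀ j ∈ Finset.Icc 1 K, 0 ≤ π j * (f (x j) - fi i (x j)) ^ 2 :=
    fun j _ => mul_nonneg (hπ0 j) (sq_nonneg _)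
  by_cases hii : i = istar
  · -- trivial case
    subst hii
    rw [hwstar]
    have h1 : π i * (f (x i) - fi i (x i)) ^ 2 ≤
        ∑ j ∈ Finset.Icc 1 K, π j * (f (x j) - fi i (x j)) ^ 2 :=
      Finset.single_le_sum hterm_nonneg (hSsub hiS)
    have h2 : 0 ≤ π i * (f (x i) - fi i (x i)) ^ 2 := mul_nonneg (hπ0 i) (sq_nonneg _)
    have h3 : 0 ≤ ε ^ 2 := sq_nonneg ε
    linarith
  · -- main case
    have hxii : x i ≠ x istar := by
      rw [hx, hx]
      intro h
      apply hii
      field_simp at h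
      exact_mod_cast h
    have hεi : 0 < εj i := by
      rw [hεj]
      exact mul_pos hε (abs_pos.mpr (sub_ne_zero.mpr hxii))
    have hB : f (x istar) ≤ f (x i) := hmin i (hSsub hiS)
    have hD : 0 < f (x i) - f (x istar) + εj i := by linarith
    obtain ⟨G, hG_def⟩ : ∃ G : ℝ, G = f (x i) - fi i (x i) := ⟨_, rfl⟩
    have hG0 : 0 ≤ G := by rw [hG_def]; linarith [hfix i hiS]
    obtain ⟨s, hs_def⟩ : ∃ s : ℝ, s = |f (x istar) - fi i (x istar)| := ⟨_, rfl⟩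
    have hs0 : 0 ≤ s := hs_def ▸ abs_nonneg _
    obtain ⟨r, hr_def⟩ : ∃ r : ℕ → ℝ,
        ∀ j, r j = (f (x j) - f (x istar) + εj j) / (f (x i) - f (x istar) + εj i) :=
      ⟨_, fun j => rfl⟩
    set T : Finset ℕ := (Si i).erase istar with hT_def
    have hTSi : T ⊆ Si i := Finset.erase_subset _ _
    have hSiS : Si i ⊆ S := by rw [hSi]; exact Finset.filter_subset _ _
    have hTIcc : T ⊆ Finset.Icc 1 K := fun j hj => hSsub (hSiS (hTSi hj))
    -- pointwise bound
    have hpoint : ∀ j ∈ Si i, r j * G - s - ε ≤ f (x j) - fi i (x j) ∧ 0 ≤ r j := by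
      intro j hjSi
      rw [hSi] at hjSi
      obtain ⟨hjS, hjmin, hjmax⟩ := Finset.mem_filter.mp hjSi
      have hxj01 := hx01 j (hSsub hjS)
      have hfj : f (x istar) ≤ f (x j) := hmin j (hSsub hjS)
      obtain ⟨t, ht_def⟩ : ∃ t : ℝ, t = (x j - x istar) / (x i - x istar) := ⟨_, rfl⟩
      have hne : x i - x istar ≠ 0 := sub_ne_zero.mpr hxii
      have hxjt : x j - x istar = t * (x i - x istar) := by
        rw [ht_def, div_mul_cancel₀ _ hne]
      have ht0 : 0 ≤ t := by
        rcases lt_or_gt_of_ne hxii with hlt | hgt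
        · have h1 : x j ≤ x istar := by
            have := hjmax
            rwa [max_eq_right hlt.le] at this
          have h2 : t = (x istar - x j) / (x istar - x i) := by
            rw [ht_def, ← neg_div_neg_eq]
            congr 1 <;> ring
          rw [h2]
          exact div_nonneg (by linarith) (by linarith)
        · have h1 : x istar ≤ x j := by
            have := hjmin
            rwa [min_eq_right hgt.le] at this
          rw [ht_def]
          exact div_nonneg (by linarith) (by linarith)
      have ht1 : t ≤ 1 := by
        rcases lt_or_gt_of_ne hxii with hlt | hgt
        · have h1 : x i ≤ x j := by
            have := hjmin
            rwa [min_eq_left hlt.le] at this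
          have h2 : t = (x istar - x j) / (x istar - x i) := by
            rw [ht_def, ← neg_div_neg_eq]
            congr 1 <;> ring
          rw [h2, div_le_one (by linarith)]
          linarith
        · have h1 : x j ≤ x i := by
            have := hjmax
            rwa [max_eq_left hgt.le] at this
          rw [ht_def, div_le_one (by linarith)]
          linarith
      have hxjcomb : x j = (1 - t) * x istar + t * x i := by linarith [hxjt]
      have hεjt : εj j = t * εj i := by
        rw [hεj, hεj, hxjt, abs_mul, abs_of_nonneg ht0]
        ring
      have hεj0 : 0 ≤ εj j := by rw [hεjt]; positivity
      have hr0 : 0 ≤ r j := by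
        rw [hr_def]
        exact div_nonneg (by linarith) hD.le
      have hconvf : f (x j) ≤ (1 - t) * f (x istar) + t * f (x i) := by
        have h := hf.2 hxstar01 hxi01 (by linarith : (0:ℝ) ≤ 1 - t) ht0 (by ring)
        simp only [smul_eq_mul] at h
        rwa [← hxjcomb] at h
      have hconvfi : fi i (x j) ≤ (1 - t) * fi i (x istar) + t * fi i (x i) := by
        have h := (hfi i hiS).2 hxstar01 hxi01 (by linarith : (0:ℝ) ≤ 1 - t) ht0 (by ring)
        simp only [smul_eq_mul] at h
        rwa [← hxjcomb] at h
      have hrt : r j ≤ t := rt_aux t (r j) (f (x j)) (f (x istar)) (f (x i)) (εj j) (εj i)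
        hD (hr_def j) hconvf hεjt
      have hεjle : εj j ≤ ε := by
        have habs : |x j - x istar| ≤ 1 := by
          rw [abs_le]
          constructor
          · linarith [hxj01.1, hxstar01.2]
          · linarith [hxj01.2, hxstar01.1]
        rw [hεj]
        exact mul_le_of_le_one_right hε.le habs
      have hrD : f (x j) - f (x istar) + εj j = r j * (f (x i) - f (x istar) + εj i) := by
        rw [hr_def, div_mul_cancel₀ _ hD.ne']
      refine ⟨?_, hr0⟩
      have hpa := pointwise_aux t (r j) G s ε (εj i) (εj j) (f (x j)) (f (x istar)) (f (x i))
        (fi i (x j)) (fi i (x istar)) (fi i (x i)) ht0 ht1 hconvfi hrD hrt hr0 hεi.le hεjle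
        (hfix i hiS) (by rw [hs_def]; exact neg_abs_le _) hs0 hG_def
      linarith
    -- sum manipulations
    have histarT : istar ∉ T := Finset.notMem_erase _ _
    have hwT : w i = ∑ j ∈ T, π j * (r j) ^ 2 := by
      rw [hw i hiS hii]
      rw [show (∑ j ∈ Si i, π j *
          ((f (x j) - f (x istar) + εj j) / (f (x i) - f (x istar) + εj i)) ^ 2)
          = ∑ j ∈ Si i, π j * (r j) ^ 2 from
        Finset.sum_congr rfl fun j _ => by rw [hr_def]]
      refine (Finset.sum_erase _ ?_).symm
      have h0 : r istar = 0 := by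
        rw [hr_def]
        have : f (x istar) - f (x istar) + εj istar = 0 := by rw [hεj]; simp
        rw [this, zero_div]
      rw [h0]
      ring
    have hmass : ∑ j ∈ T, π j ≤ 1/2 := by
      have h1 : ∑ j ∈ (Finset.Icc 1 K).erase istar, π j + π istar = 1 := by
        rw [Finset.sum_erase_add _ _ histar, hπ1]
      have h2 : ∑ j ∈ T, π j ≤ ∑ j ∈ (Finset.Icc 1 K).erase istar, π j := by
        apply Finset.sum_le_sum_of_subset_of_nonneg
        · exact fun j hj => Finset.mem_erase.mpr ⟨Finset.ne_of_mem_erase hj, hTIcc hj⟩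
        · exact fun j _ _ => hπ0 j
      linarith
    have hmass0 : 0 ≤ ∑ j ∈ T, π j := Finset.sum_nonneg fun j _ => hπ0 j
    -- chain of inequalities
    have step1 : ∑ j ∈ T, π j * ((r j * G)^2/4 - 2*ε^2) ≤
        ∑ j ∈ T, π j * (s^2 + (f (x j) - fi i (x j))^2) := by
      apply Finset.sum_le_sum
      intro j hj
      obtain ⟨hp, hr0⟩ := hpoint j (hTSi hj)
      exact mul_le_mul_of_nonneg_left
        (scalar_aux (r j * G) s (f (x j) - fi i (x j)) ε (mul_nonneg hr0 hG0) hs0 hε.le hp)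
        (hπ0 j)
    have step2 : ∑ j ∈ T, π j * (s^2 + (f (x j) - fi i (x j))^2) ≤
        ∑ j ∈ insert istar T, π j * (f (x j) - fi i (x j))^2 := by
      rw [Finset.sum_insert histarT]
      have hA : (∑ j ∈ T, π j) * s^2 ≤ π istar * (f (x istar) - fi i (x istar))^2 := by
        rw [hs_def, ← sq_abs (f (x istar) - fi i (x istar))]
        exact mul_le_mul_of_nonneg_right (by linarith) (sq_nonneg _)
      have hsplit : ∑ j ∈ T, π j * (s^2 + (f (x j) - fi i (x j))^2)
          = (∑ j ∈ T, π j) * s^2 + ∑ j ∈ T, π j * (f (x j) - fi i (x j))^2 := by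
        rw [Finset.sum_mul, ← Finset.sum_add_distrib]
        exact Finset.sum_congr rfl fun j _ => by ring
      rw [hsplit]
      exact add_le_add_left hA _
    have step3 : ∑ j ∈ insert istar T, π j * (f (x j) - fi i (x j))^2 ≤
        ∑ j ∈ Finset.Icc 1 K, π j * (f (x j) - fi i (x j))^2 := by
      apply Finset.sum_le_sum_of_subset_of_nonneg
      · rw [Finset.insert_subset_iff]
        exact ⟨histar, hTIcc⟩
      · exact fun j hj _ => hterm_nonneg j hj
    have step0 : (1/4) * w i * G^2 - ε^2 ≤ ∑ j ∈ T, π j * ((r j * G)^2/4 - 2*ε^2) := by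
      have hsum : ∑ j ∈ T, π j * ((r j * G)^2/4 - 2*ε^2)
          = (∑ j ∈ T, π j * (r j)^2) * (G^2/4) - (∑ j ∈ T, π j) * (2*ε^2) := by
        rw [Finset.sum_mul, Finset.sum_mul, ← Finset.sum_sub_distrib]
        exact Finset.sum_congr rfl fun j _ => by ring
      rw [hsum, ← hwT]
      have hb : (∑ j ∈ T, π j) * (2*ε^2) ≤ (1/2) * (2*ε^2) :=
        mul_le_mul_of_nonneg_right hmass (by positivity)
      have : (1/4) * w i * G^2 = w i * (G^2/4) := by ring
      linarith
    rw [← hG_def]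
    calc (1/4) * w i * G ^ 2 - ε^2 ≤ _ := step0
      _ ≤ _ := step1
      _ ≤ _ := step2
      _ ≤ _ := step3
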